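/- For directed F ⊆ ω^ω and a nontrivial abelian group G, lim^1 A^F_G ≠ 0 if and only if there exists a family ⟨φ_f : I_f → G | f ∈ F⟩ that is coherent (φ_f =* φ_g on I_f ∩ I_g for all f,g ∈ F) and nontrivial (no ψ : ω × ω → G satisfies ψ ↾ I_f =* φ_f for all f ∈ F). -/

import Mathlib

/-- The set Λ^(n) of ≤-ordered (n+1)-tuples in Λ. -/
def RoosTuple (Λ : Type*) [Preorder Λ] (n : ℕ) : Type _ :=
  {l : Fin (n + 1) → Λ // Monotone l}

/-- K^n(G): the group of Roos n-cochains. -/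
def RoosCochain (Λ : Type*) [Preorder Λ] (G : Λ → Type*) [∀ a, AddCommGroup (G a)]
    (n : ℕ) : Type _ :=
  ∀ l : RoosTuple Λ n, G (l.1 0)

instance {Λ : Type*} [Preorder Λ] (G : Λ → Type*) [∀ a, AddCommGroup (G a)] (n : ℕ) :
    AddCommGroup (RoosCochain Λ G n) :=
  inferInstanceAs (AddCommGroup (∀ l : RoosTuple Λ n, G (l.1 0)))

/-- The tuple λ̄^i obtained by removing the i-th entry. -/
def RoosTuple.remove {Λ : Type*} [Preorder Λ] {n : ℕ} (l : RoosTuple Λ (n + 1))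
    (i : Fin (n + 2)) : RoosTuple Λ n :=
  ⟨l.1 ∘ i.succAbove, l.2.comp (Fin.strictMono_succAbove i).monotone⟩

lemma RoosTuple.remove_zero_fst {Λ : Type*} [Preorder Λ] {n : ℕ}
    (l : RoosTuple Λ (n + 1)) : (l.remove 0).1 0 = l.1 1 := by
  show l.1 ((0 : Fin (n + 2)).succAbove 0) = l.1 1
  congr 1

lemma RoosTuple.remove_succ_fst {Λ : Type*} [Preorder Λ] {n : ℕ}
    (l : RoosTuple Λ (n + 1)) (i : Fin (n + 1)) : (l.remove i.succ).1 0 = l.1 0 := by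
  show l.1 (i.succ.succAbove 0) = l.1 0
  simp [Fin.succAbove]

/-- The Roos coboundary δ : K^n → K^{n+1},
`(δ x)_λ̄ = p^{λ₁}_{λ₀}(x_{λ̄⁰}) + Σ_{1 ≤ i ≤ n+1} (-1)^i x_{λ̄^i}`. -/
def roosDelta {Λ : Type*} [Preorder Λ] (G : Λ → Type*) [∀ a, AddCommGroup (G a)]
    (p : ∀ a b : Λ, a ≤ b → (G b →+ G a)) (n : ℕ)
    (x : RoosCochain Λ G n) : RoosCochain Λ G (n + 1) := fun l =>
  p (l.1 0) (l.1 1) (l.2 (by exact Fin.zero_le 1))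
      (cast (congrArg G l.remove_zero_fst) (x (l.remove 0)))
    + ∑ i : Fin (n + 1),
        ((-1 : ℤ) ^ (i.1 + 1)) •
          cast (congrArg G (l.remove_succ_fst i)) (x (l.remove i.succ))

/-- `I_f = {(i,j) : j ≤ f(i)}`. -/
def Ifun (f : ℕ → ℕ) : Set (ℕ × ℕ) := {p : ℕ × ℕ | p.2 ≤ f p.1}

/-- The object of the system A^F_G at f: finitely supported functions I_f → G. -/
def Aobj (G : Type*) [AddCommGroup G] (f : ℕ → ℕ) : Type _ :=
  ((Ifun f : Set (ℕ × ℕ)) →₀ G)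

noncomputable instance (G : Type*) [AddCommGroup G] (f : ℕ → ℕ) :
    AddCommGroup (Aobj G f) :=
  inferInstanceAs (AddCommGroup ((Ifun f : Set (ℕ × ℕ)) →₀ G))

/-- The bonding projections of the system A^F_G. -/
noncomputable def Abond (G : Type*) [AddCommGroup G] (F : Set (ℕ → ℕ))
    (f g : F) (h : f ≤ g) : Aobj G g.1 →+ Aobj G f.1 :=
  Finsupp.comapDomain.addMonoidHom
    (f := fun q : (Ifun f.1 : Set (ℕ × ℕ)) => (⟨q.1, le_trans q.2 (h q.1.1)⟩ :
      (Ifun g.1 : Set (ℕ × ℕ))))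
    (by
      intro q q' hqq'
      apply Subtype.ext
      have := congrArg Subtype.val hqq'
      simpa using this)

section Aux

variable {G : Type*} [AddCommGroup G] {F : Set (ℕ → ℕ)}

/-- View an element of `Aobj` as a finsupp. -/
def toF {f : ℕ → ℕ} (a : Aobj G f) : ((Ifun f : Set (ℕ × ℕ)) →₀ G) := a

lemma toF_abond (f g : F) (h : f ≤ g) (a : Aobj G g.1) (q : (Ifun f.1 : Set (ℕ × ℕ))) :
    toF (Abond G F f g h a) q = toF a ⟨q.1, le_trans q.2 (h q.1.1)⟩ := rfl

lemma toF_sub {f : ℕ → ℕ} (a b : Aobj G f) (q) : toF (a - b) q = toF a q - toF b q := by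
  show (toF a - toF b) q = _
  simp

def singleT (f : F) : RoosTuple F 0 := ⟨fun _ => f, monotone_const⟩

def pairT (f g : F) (h : f ≤ g) : RoosTuple F 1 :=
  ⟨![f, g], by
    intro i j hij
    fin_cases i <;> fin_cases j <;> simp_all <;> first | exact h | exact absurd hij (by decide)⟩

def tripleT (f g k : F) (h1 : f ≤ g) (h2 : g ≤ k) : RoosTuple F 2 :=
  ⟨![f, g, k], by
    intro i j hij
    fin_cases i <;> fin_cases j <;>
      simp_all <;>
      first
        | exact h1 | exact h2 | exact le_trans h1 h2
        | exact absurd hij (by decide)⟩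

lemma singleT_eq (t : RoosTuple F 0) : t = singleT (t.1 0) := by
  apply Subtype.ext
  funext i
  have : i = 0 := Fin.fin_one_eq_zero i
  rw [this]; rfl

lemma pairT_eq (t : RoosTuple F 1) : t = pairT (t.1 0) (t.1 1) (t.2 (by decide)) := by
  apply Subtype.ext
  funext i
  fin_cases i <;> rfl

lemma cast_X (X : ∀ f g : F, f ≤ g → Aobj G f.1) {a a' b b' : F} (e : a = a') (e2 : b = b')
    (h : a ≤ b) (h' : a' ≤ b') :
    cast (congrArg (fun f : F => Aobj G f.1) e) (X a b h) = X a' b' h' := by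
  subst e; subst e2; rfl

lemma cast_Y (Y : ∀ f : F, Aobj G f.1) {a a' : F} (e : a = a') :
    cast (congrArg (fun f : F => Aobj G f.1) e) (Y a) = Y a' := by
  subst e; rfl

lemma delta0_eval (Y : ∀ f : F, Aobj G f.1) (l : RoosTuple F 1) :
    roosDelta (fun f : F => Aobj G f.1) (Abond G F) 0 (fun t => Y (t.1 0)) l
      = Abond G F (l.1 0) (l.1 1) (l.2 (by decide)) (Y (l.1 1)) - Y (l.1 0) := by
  show Abond G F (l.1 0) (l.1 1) _ (cast _ (Y ((l.remove 0).1 0)))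
      + ∑ i : Fin 1, ((-1 : ℤ) ^ (i.1 + 1)) •
          cast (congrArg (fun f : F => Aobj G f.1) (l.remove_succ_fst i)) (Y ((l.remove i.succ).1 0)) = _
  rw [Fin.sum_univ_one, cast_Y Y l.remove_zero_fst, cast_Y Y (l.remove_succ_fst 0)]
  simp [sub_eq_add_neg]

end Aux
section Aux2

variable {G : Type*} [AddCommGroup G] {F : Set (ℕ → ℕ)}

lemma remove_snd (l : RoosTuple F 2) (j : Fin 3) (k : Fin 3) (h : j.succAbove 1 = k) :
    (l.remove j).1 1 = l.1 k := congrArg l.1 h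

lemma delta1_eval (X : ∀ f g : F, f ≤ g → Aobj G f.1) (l : RoosTuple F 2) :
    roosDelta (fun f : F => Aobj G f.1) (Abond G F) 1
      (fun t => X (t.1 0) (t.1 1) (t.2 (by decide))) l
      = Abond G F (l.1 0) (l.1 1) (l.2 (by decide))
          (X (l.1 1) (l.1 2) (l.2 (by decide)))
        - X (l.1 0) (l.1 2) (l.2 (by decide))
        + X (l.1 0) (l.1 1) (l.2 (by decide)) := by
  show Abond G F (l.1 0) (l.1 1) _
      (cast (congrArg (fun f : F => Aobj G f.1) l.remove_zero_fst)
        (X ((l.remove 0).1 0) ((l.remove 0).1 1) ((l.remove 0).2 (by decide))))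
    + ∑ i : Fin 2, ((-1 : ℤ) ^ (i.1 + 1)) •
        cast (congrArg (fun f : F => Aobj G f.1) (l.remove_succ_fst i))
          (X ((l.remove i.succ).1 0) ((l.remove i.succ).1 1) ((l.remove i.succ).2 (by decide))) = _
  rw [Fin.sum_univ_two]
  rw [cast_X X l.remove_zero_fst (remove_snd l 0 2 (by decide)) _ (l.2 (by decide))]
  rw [cast_X X (l.remove_succ_fst 0) (remove_snd l ((0 : Fin 2).succ) 2 (by decide)) _
    (l.2 (by decide))]
  rw [cast_X X (l.remove_succ_fst 1) (remove_snd l ((1 : Fin 2).succ) 1 (by decide)) _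
    (l.2 (by decide))]
  norm_num
  abel

end Aux2
section Aux3

variable {G : Type*} [AddCommGroup G] {F : Set (ℕ → ℕ)}

lemma delta0_eval_pair (Y : ∀ f : F, Aobj G f.1) (f g : F) (h : f ≤ g) :
    roosDelta (fun f : F => Aobj G f.1) (Abond G F) 0 (fun t => Y (t.1 0)) (pairT f g h)
      = Abond G F f g h (Y g) - Y f := by
  rw [delta0_eval]; rfl

lemma delta1_eval_triple (X : ∀ f g : F, f ≤ g → Aobj G f.1) (f g k : F)
    (h1 : f ≤ g) (h2 : g ≤ k) :
    roosDelta (fun f : F => Aobj G f.1) (Abond G F) 1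
      (fun t => X (t.1 0) (t.1 1) (t.2 (by decide))) (tripleT f g k h1 h2)
      = Abond G F f g h1 (X g k h2) - X f k (h1.trans h2) + X f g h1 := by
  rw [delta1_eval]; rfl

lemma lhs_iff_clean :
    (∃ x : RoosCochain F (fun f => Aobj G f.1) 1,
        roosDelta (fun f : F => Aobj G f.1) (Abond G F) 1 x = 0 ∧
        ¬ ∃ y : RoosCochain F (fun f => Aobj G f.1) 0,
            roosDelta (fun f : F => Aobj G f.1) (Abond G F) 0 y = x) ↔
    (∃ X : ∀ f g : F, f ≤ g → Aobj G f.1,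
        (∀ (f g k : F) (h1 : f ≤ g) (h2 : g ≤ k),
          Abond G F f g h1 (X g k h2) - X f k (h1.trans h2) + X f g h1 = 0) ∧
        ¬ ∃ Y : ∀ f : F, Aobj G f.1, ∀ (f g : F) (h : f ≤ g),
            X f g h = Abond G F f g h (Y g) - Y f) := by
  constructor
  · rintro ⟨x, hx0, hncb⟩
    refine ⟨fun f g h => x (pairT f g h), ?_, ?_⟩
    · have hxX : x = (fun t : RoosTuple F 1 =>
          x (pairT (t.1 0) (t.1 1) (t.2 (by decide)))) := by
        funext t
        rw [pairT_eq t]; rfl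
      intro f g k h1 h2
      rw [hxX] at hx0
      have := congrFun hx0 (tripleT f g k h1 h2)
      exact ((delta1_eval_triple (fun f g h => x (pairT f g h)) f g k h1 h2).symm.trans this)
    · rintro ⟨Y, hY⟩
      apply hncb
      refine ⟨fun t : RoosTuple F 0 => Y (t.1 0), funext fun l => ?_⟩
      rw [delta0_eval]
      rw [pairT_eq l]
      exact (hY _ _ _).symm
  · rintro ⟨X, hcoc, hncb⟩
    refine ⟨fun t : RoosTuple F 1 => X (t.1 0) (t.1 1) (t.2 (by decide)),
      funext fun l => ?_, ?_⟩
    · exact (delta1_eval X l).trans (hcoc _ _ _ _ _)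
    · rintro ⟨y, hy⟩
      apply hncb
      have hyY : y = (fun t : RoosTuple F 0 => y (singleT (t.1 0))) := by
        funext t
        rw [singleT_eq t]; rfl
      refine ⟨fun f => y (singleT f), fun f g h => ?_⟩
      rw [hyY] at hy
      have := congrFun hy (pairT f g h)
      exact (((delta0_eval_pair (fun f => y (singleT f)) f g h).symm.trans this).symm)

end Aux3
section Aux4

variable {G : Type*} [AddCommGroup G] {F : Set (ℕ → ℕ)}

lemma Ifun_mono {f g : F} (h : f ≤ g) {p : ℕ × ℕ} (hp : p ∈ Ifun f.1) : p ∈ Ifun g.1 :=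
  le_trans hp (h p.1)

lemma toF_apply_arith {f : ℕ → ℕ} (a b c : Aobj G f) (q) :
    toF (a - b + c) q = toF a q - toF b q + toF c q := by
  show (toF a - toF b + toF c) q = _
  simp

/-- Pointwise value of a 1-cochain. -/
noncomputable def Xv (X : ∀ f g : F, f ≤ g → Aobj G f.1) (f g : F) (h : f ≤ g)
    (p : ℕ × ℕ) : G :=
  @dite _ (p ∈ Ifun f.1) (Classical.dec _) (fun hp => toF (X f g h) ⟨p, hp⟩) (fun _ => 0)

/-- Cocycle condition notation. -/
def Cocyc (X : ∀ f g : F, f ≤ g → Aobj G f.1) : Prop :=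
  ∀ (f g k : F) (h1 : f ≤ g) (h2 : g ≤ k),
    Abond G F f g h1 (X g k h2) - X f k (h1.trans h2) + X f g h1 = 0

lemma Xv_cocycle {X : ∀ f g : F, f ≤ g → Aobj G f.1} (hcoc : Cocyc X)
    {f g k : F} (h1 : f ≤ g) (h2 : g ≤ k) {p : ℕ × ℕ} (hp : p ∈ Ifun f.1) :
    Xv X f k (h1.trans h2) p = Xv X f g h1 p + Xv X g k h2 p := by
  have hpg : p ∈ Ifun g.1 := Ifun_mono h1 hp
  have h : toF (X g k h2) ⟨p, hpg⟩ - toF (X f k (h1.trans h2)) ⟨p, hp⟩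
      + toF (X f g h1) ⟨p, hp⟩ = 0 :=
    congrArg (fun a : Aobj G f.1 => toF a ⟨p, hp⟩) (hcoc f g k h1 h2)
  rw [sub_add_eq_add_sub, sub_eq_zero] at h
  unfold Xv
  rw [dif_pos hp, dif_pos hp, dif_pos hpg]
  exact h.symm.trans (add_comm _ _)

lemma Xv_self {X : ∀ f g : F, f ≤ g → Aobj G f.1} (hcoc : Cocyc X)
    (g : F) (h : g ≤ g) (p : ℕ × ℕ) : Xv X g g h p = 0 := by
  by_cases hp : p ∈ Ifun g.1
  · have h2 := Xv_cocycle hcoc h h hp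
    have e : Xv X g g (h.trans h) p = Xv X g g h p := rfl
    rw [e] at h2
    exact (left_eq_add.mp h2)
  · unfold Xv
    exact dif_neg hp

/-- Choice of upper bound in a directed family. -/
noncomputable def ub (hdir : DirectedOn (· ≤ ·) F) (a b : F) : F :=
  ⟨(hdir a.1 a.2 b.1 b.2).choose, (hdir a.1 a.2 b.1 b.2).choose_spec.1⟩

lemma ub_left (hdir : DirectedOn (· ≤ ·) F) (a b : F) : a ≤ ub hdir a b := (hdir a.1 a.2 b.1 b.2).choose_spec.2.1

lemma ub_right (hdir : DirectedOn (· ≤ ·) F) (a b : F) : b ≤ ub hdir a b := (hdir a.1 a.2 b.1 b.2).choose_spec.2.2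

lemma Xv_step {X : ∀ f g : F, f ≤ g → Aobj G f.1} (hcoc : Cocyc X)
    {a b H K : F} (haH : a ≤ H) (hbH : b ≤ H) (hHK : H ≤ K)
    {p : ℕ × ℕ} (hpa : p ∈ Ifun a.1) (hpb : p ∈ Ifun b.1) :
    Xv X a H haH p - Xv X b H hbH p
      = Xv X a K (haH.trans hHK) p - Xv X b K (hbH.trans hHK) p := by
  rw [Xv_cocycle hcoc haH hHK hpa, Xv_cocycle hcoc hbH hHK hpb]
  abel

lemma Xv_indep (hdir : DirectedOn (· ≤ ·) F) {X : ∀ f g : F, f ≤ g → Aobj G f.1} (hcoc : Cocyc X)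
    {a b H1 H2 : F} (ha1 : a ≤ H1) (hb1 : b ≤ H1) (ha2 : a ≤ H2) (hb2 : b ≤ H2)
    {p : ℕ × ℕ} (hpa : p ∈ Ifun a.1) (hpb : p ∈ Ifun b.1) :
    Xv X a H1 ha1 p - Xv X b H1 hb1 p = Xv X a H2 ha2 p - Xv X b H2 hb2 p := by
  have e1 := Xv_step hcoc ha1 hb1 (ub_left hdir H1 H2) hpa hpb
  have e2 := Xv_step hcoc ha2 hb2 (ub_right hdir H1 H2) hpa hpb
  exact e1.trans e2.symm

end Aux4
section Aux5

variable {G : Type*} [AddCommGroup G] {F : Set (ℕ → ℕ)}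

lemma Xv_eq {X : ∀ f g : F, f ≤ g → Aobj G f.1} {f g : F} {h : f ≤ g} {p : ℕ × ℕ}
    (hp : p ∈ Ifun f.1) : Xv X f g h p = toF (X f g h) ⟨p, hp⟩ := dif_pos hp

noncomputable def bpt {p : ℕ × ℕ} (hex : ∃ q : F, p ∈ Ifun q.1) : F := hex.choose

lemma bpt_mem {p : ℕ × ℕ} (hex : ∃ q : F, p ∈ Ifun q.1) : p ∈ Ifun (bpt hex).1 :=
  hex.choose_spec

/-- The pointwise trivialization of the cocycle over the full product system. -/
noncomputable def yy (hdir : DirectedOn (· ≤ ·) F) (X : ∀ f g : F, f ≤ g → Aobj G f.1)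
    (f : F) (p : ℕ × ℕ) : G :=
  @dite _ (p ∈ Ifun f.1) (Classical.dec _) (fun hp =>
    Xv X (bpt ⟨f, hp⟩) (ub hdir (bpt ⟨f, hp⟩) f) (ub_left hdir _ _) p
      - Xv X f (ub hdir (bpt ⟨f, hp⟩) f) (ub_right hdir _ _) p) (fun _ => 0)

lemma c_diff (hdir : DirectedOn (· ≤ ·) F) {X : ∀ f g : F, f ≤ g → Aobj G f.1}
    (hcoc : Cocyc X) (b f g : F) (hfg : f ≤ g) {p : ℕ × ℕ}
    (hpb : p ∈ Ifun b.1) (hp : p ∈ Ifun f.1) :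
    (Xv X b (ub hdir b g) (ub_left hdir b g) p - Xv X g (ub hdir b g) (ub_right hdir b g) p)
      - (Xv X b (ub hdir b f) (ub_left hdir b f) p - Xv X f (ub hdir b f) (ub_right hdir b f) p)
      = Xv X f g hfg p := by
  have hpg : p ∈ Ifun g.1 := Ifun_mono hfg hp
  set Hf := ub hdir b f with hHf
  set Hg := ub hdir b g with hHg
  set K := ub hdir Hf Hg with hK
  have hbK : b ≤ K := (ub_left hdir b f).trans (ub_left hdir Hf Hg)
  have hfK : f ≤ K := (ub_right hdir b f).trans (ub_left hdir Hf Hg)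
  have hgK : g ≤ K := (ub_right hdir b g).trans (ub_right hdir Hf Hg)
  have e1 : Xv X b Hg (ub_left hdir b g) p - Xv X g Hg (ub_right hdir b g) p
      = Xv X b K hbK p - Xv X g K hgK p :=
    Xv_indep hdir hcoc _ _ hbK hgK hpb hpg
  have e2 : Xv X b Hf (ub_left hdir b f) p - Xv X f Hf (ub_right hdir b f) p
      = Xv X b K hbK p - Xv X f K hfK p :=
    Xv_indep hdir hcoc _ _ hbK hfK hpb hp
  rw [e1, e2]
  have e3 : Xv X f K hfK p - Xv X g K hgK p = Xv X f g hfg p - Xv X g g le_rfl p :=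
    Xv_indep hdir hcoc hfK hgK hfg le_rfl hp hpg
  rw [Xv_self hcoc g le_rfl p, sub_zero] at e3
  rw [← e3]
  abel

lemma yy_diff (hdir : DirectedOn (· ≤ ·) F) {X : ∀ f g : F, f ≤ g → Aobj G f.1}
    (hcoc : Cocyc X) {f g : F} (hfg : f ≤ g) {p : ℕ × ℕ} (hp : p ∈ Ifun f.1) :
    yy hdir X g p - yy hdir X f p = Xv X f g hfg p := by
  have hp' : p ∈ Ifun g.1 := Ifun_mono hfg hp
  unfold yy
  rw [dif_pos hp', dif_pos hp]
  exact c_diff hdir hcoc (bpt ⟨f, hp⟩) f g hfg (bpt_mem _) hp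

end Aux5
section Aux6

variable {G : Type*} [AddCommGroup G] {F : Set (ℕ → ℕ)}

lemma Aobj_ext {f : ℕ → ℕ} {a b : Aobj G f} (h : ∀ q, toF a q = toF b q) : a = b :=
  show toF a = toF b from Finsupp.ext h

/-- The coherent family extracted from a cocycle. -/
noncomputable def phi (hdir : DirectedOn (· ≤ ·) F) (X : ∀ f g : F, f ≤ g → Aobj G f.1)
    (f : ℕ → ℕ) (p : ℕ × ℕ) : G :=
  @dite _ (f ∈ F) (Classical.dec _) (fun hf => yy hdir X ⟨f, hf⟩ p) (fun _ => 0)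

lemma phi_eq (hdir : DirectedOn (· ≤ ·) F) (X : ∀ f g : F, f ≤ g → Aobj G f.1)
    (f : F) (p : ℕ × ℕ) : phi hdir X f.1 p = yy hdir X f p := by
  unfold phi
  rw [dif_pos f.2]

lemma clean_to_rhs (hdir : DirectedOn (· ≤ ·) F) {X : ∀ f g : F, f ≤ g → Aobj G f.1}
    (hcoc : Cocyc X)
    (hncb : ¬ ∃ Y : ∀ f : F, Aobj G f.1, ∀ (f g : F) (h : f ≤ g),
        X f g h = Abond G F f g h (Y g) - Y f) :
    ∃ φ : (ℕ → ℕ) → ℕ × ℕ → G,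
      (∀ f ∈ F, ∀ g ∈ F, {p ∈ Ifun f ∩ Ifun g | φ f p ≠ φ g p}.Finite) ∧
      ¬ ∃ ψ : ℕ × ℕ → G, ∀ f ∈ F, {p ∈ Ifun f | ψ p ≠ φ f p}.Finite := by
  refine ⟨phi hdir X, ?_, ?_⟩
  · intro f hf g hg
    set f' : F := ⟨f, hf⟩
    set g' : F := ⟨g, hg⟩
    set H : F := ub hdir f' g'
    apply Set.Finite.subset
      (Set.Finite.union
        (((toF (X f' H (ub_left hdir f' g'))).support.finite_toSet).image Subtype.val)
        (((toF (X g' H (ub_right hdir f' g'))).support.finite_toSet).image Subtype.val))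
    rintro p ⟨⟨hpf, hpg⟩, hne⟩
    by_contra hns
    rw [Set.mem_union] at hns
    push_neg at hns
    obtain ⟨hn1, hn2⟩ := hns
    have z1 : toF (X f' H (ub_left hdir f' g')) ⟨p, hpf⟩ = 0 := by
      by_contra hz
      exact hn1 ⟨⟨p, hpf⟩, Finsupp.mem_support_iff.mpr hz, rfl⟩
    have z2 : toF (X g' H (ub_right hdir f' g')) ⟨p, hpg⟩ = 0 := by
      by_contra hz
      exact hn2 ⟨⟨p, hpg⟩, Finsupp.mem_support_iff.mpr hz, rfl⟩
    have d1 := yy_diff hdir hcoc (ub_left hdir f' g') hpf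
    have d2 := yy_diff hdir hcoc (ub_right hdir f' g') hpg
    rw [Xv_eq hpf, z1, sub_eq_zero] at d1
    rw [Xv_eq hpg, z2, sub_eq_zero] at d2
    apply hne
    rw [phi_eq hdir X f' p, phi_eq hdir X g' p, ← d1, ← d2]
  · rintro ⟨ψ, hψ⟩
    apply hncb
    have hfin : ∀ f' : F, {q : (Ifun f'.1 : Set (ℕ × ℕ)) | yy hdir X f' q.1 - ψ q.1 ≠ 0}.Finite := by
      intro f'
      apply Set.Finite.subset (Set.Finite.preimage (Set.injOn_of_injective Subtype.val_injective)
        (hψ f'.1 f'.2))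
      intro q hq
      refine ⟨q.2, fun e => hq ?_⟩
      show yy hdir X f' q.1 - ψ q.1 = 0
      rw [e, phi_eq hdir X f' q.1, sub_self]
    refine ⟨fun f' => (Finsupp.onFinset (hfin f').toFinset
      (fun q => yy hdir X f' q.1 - ψ q.1)
      (fun q hq => (hfin f').mem_toFinset.mpr hq) : Aobj G f'.1), fun f g h => ?_⟩
    apply Aobj_ext
    intro q
    refine Eq.trans ?_ (toF_sub _ _ q).symm
    erw [toF_abond f g h]
    have e1 : toF (Finsupp.onFinset (hfin g).toFinset (fun q => yy hdir X g q.1 - ψ q.1)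
        (fun q hq => (hfin g).mem_toFinset.mpr hq))
        (⟨q.1, le_trans q.2 (h q.1.1)⟩ : (Ifun g.1 : Set (ℕ × ℕ)))
        = yy hdir X g q.1 - ψ q.1 := Finsupp.onFinset_apply
    have e2 : toF (Finsupp.onFinset (hfin f).toFinset (fun q => yy hdir X f q.1 - ψ q.1)
        (fun q hq => (hfin f).mem_toFinset.mpr hq)) q
        = yy hdir X f q.1 - ψ q.1 := Finsupp.onFinset_apply
    rw [e1, e2]
    have := yy_diff hdir hcoc h q.2
    rw [Xv_eq q.2] at this
    have eq : (⟨q.1, q.2⟩ : (Ifun f.1 : Set (ℕ × ℕ))) = q := rfl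
    rw [eq] at this
    rw [← this]
    abel

end Aux6
section Aux7

variable {G : Type*} [AddCommGroup G] {F : Set (ℕ → ℕ)}

lemma rhs_to_clean (hdir : DirectedOn (· ≤ ·) F) (φ : (ℕ → ℕ) → ℕ × ℕ → G)
    (hcoh : ∀ f ∈ F, ∀ g ∈ F, {p ∈ Ifun f ∩ Ifun g | φ f p ≠ φ g p}.Finite)
    (hnt : ¬ ∃ ψ : ℕ × ℕ → G, ∀ f ∈ F, {p ∈ Ifun f | ψ p ≠ φ f p}.Finite) :
    ∃ X : ∀ f g : F, f ≤ g → Aobj G f.1, Cocyc X ∧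
      ¬ ∃ Y : ∀ f : F, Aobj G f.1, ∀ (f g : F) (h : f ≤ g),
          X f g h = Abond G F f g h (Y g) - Y f := by
  have hfin : ∀ (f g : F), f ≤ g →
      {q : (Ifun f.1 : Set (ℕ × ℕ)) | φ g.1 q.1 - φ f.1 q.1 ≠ 0}.Finite := by
    intro f g h
    apply Set.Finite.subset (Set.Finite.preimage
      (Set.injOn_of_injective Subtype.val_injective) (hcoh f.1 f.2 g.1 g.2))
    intro q hq
    exact ⟨⟨q.2, Ifun_mono h q.2⟩, fun e => hq (by
      show φ g.1 q.1 - φ f.1 q.1 = 0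
      rw [e, sub_self])⟩
  let X : ∀ f g : F, f ≤ g → Aobj G f.1 := fun f g h =>
    (Finsupp.onFinset (hfin f g h).toFinset (fun q => φ g.1 q.1 - φ f.1 q.1)
      (fun q hq => (hfin f g h).mem_toFinset.mpr hq) : Aobj G f.1)
  have hXapp : ∀ (f g : F) (h : f ≤ g) (q : (Ifun f.1 : Set (ℕ × ℕ))),
      toF (X f g h) q = φ g.1 q.1 - φ f.1 q.1 := fun f g h q =>
    (Finsupp.onFinset_apply (s := (hfin f g h).toFinset)
      (f := fun q : (Ifun f.1 : Set (ℕ × ℕ)) => φ g.1 q.1 - φ f.1 q.1)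
      (hf := fun q hq => (hfin f g h).mem_toFinset.mpr hq) (a := q))
  refine ⟨X, ?_, ?_⟩
  · intro f g k h1 h2
    apply Aobj_ext
    intro q
    rw [toF_apply_arith, toF_abond, hXapp g k h2, hXapp f k (h1.trans h2), hXapp f g h1]
    show (φ k.1 q.1 - φ g.1 q.1) - (φ k.1 q.1 - φ f.1 q.1) + (φ g.1 q.1 - φ f.1 q.1) = 0
    abel
  · rintro ⟨Y, hY⟩
    apply hnt
    have u_agree : ∀ (a b : F) (h : a ≤ b) (p : ℕ × ℕ) (hp : p ∈ Ifun a.1),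
        φ b.1 p - toF (Y b) ⟨p, Ifun_mono h hp⟩ = φ a.1 p - toF (Y a) ⟨p, hp⟩ := by
      intro a b h p hp
      have e : toF (X a b h) ⟨p, hp⟩ = toF (Abond G F a b h (Y b) - Y a) ⟨p, hp⟩ :=
        congrArg (fun z : Aobj G a.1 => toF z ⟨p, hp⟩) (hY a b h)
      rw [hXapp a b h, toF_sub, toF_abond] at e
      exact sub_eq_sub_iff_sub_eq_sub.mpr e
    refine ⟨fun p => @dite _ (∃ q : F, p ∈ Ifun q.1) (Classical.dec _)
      (fun hex => φ (bpt hex).1 p - toF (Y (bpt hex)) ⟨p, bpt_mem hex⟩) (fun _ => 0), ?_⟩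
    intro f hf
    apply Set.Finite.subset (((toF (Y ⟨f, hf⟩)).support.finite_toSet).image Subtype.val)
    rintro p ⟨hpf, hne⟩
    have hex : ∃ q : F, p ∈ Ifun q.1 := ⟨⟨f, hf⟩, hpf⟩
    have hψp : (fun p => @dite _ (∃ q : F, p ∈ Ifun q.1) (Classical.dec _)
        (fun hex => φ (bpt hex).1 p - toF (Y (bpt hex)) ⟨p, bpt_mem hex⟩) (fun _ => 0)) p
        = φ f p - toF (Y ⟨f, hf⟩) ⟨p, hpf⟩ := by
      show @dite _ (∃ q : F, p ∈ Ifun q.1) (Classical.dec _)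
        (fun hex => φ (bpt hex).1 p - toF (Y (bpt hex)) ⟨p, bpt_mem hex⟩) (fun _ => 0)
        = φ f p - toF (Y ⟨f, hf⟩) ⟨p, hpf⟩
      rw [dif_pos hex]
      exact ((u_agree (bpt hex) (ub hdir (bpt hex) ⟨f, hf⟩) (ub_left hdir _ _) p
        (bpt_mem hex)).symm.trans
        (u_agree ⟨f, hf⟩ (ub hdir (bpt hex) ⟨f, hf⟩) (ub_right hdir _ _) p hpf))
    refine ⟨⟨p, hpf⟩, Finsupp.mem_support_iff.mpr (fun hz => hne ?_), rfl⟩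
    show (fun p => @dite _ (∃ q : F, p ∈ Ifun q.1) (Classical.dec _)
        (fun hex => φ (bpt hex).1 p - toF (Y (bpt hex)) ⟨p, bpt_mem hex⟩) (fun _ => 0)) p
        = φ f p
    rw [hψp, hz, sub_zero]

end Aux7

/-- for directed F ⊆ ω^ω and a nontrivial abelian group G,
lim¹ A^F_G ≠ 0 (expressed via the Roos complex: there is a 1-cocycle that is not a
coboundary) iff there is a coherent nontrivial family ⟨φ_f : I_f → G | f ∈ F⟩. -/
theorem stmt14 {G : Type*} [AddCommGroup G] [Nontrivial G]
    (F : Set (ℕ → ℕ)) (hdir : DirectedOn (· ≤ ·) F) :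
    (∃ x : RoosCochain F (fun f => Aobj G f.1) 1,
        roosDelta (fun f : F => Aobj G f.1) (Abond G F) 1 x = 0 ∧
        ¬ ∃ y : RoosCochain F (fun f => Aobj G f.1) 0,
            roosDelta (fun f : F => Aobj G f.1) (Abond G F) 0 y = x) ↔
    (∃ φ : (ℕ → ℕ) → ℕ × ℕ → G,
        (∀ f ∈ F, ∀ g ∈ F, {p ∈ Ifun f ∩ Ifun g | φ f p ≠ φ g p}.Finite) ∧
        ¬ ∃ ψ : ℕ × ℕ → G, ∀ f ∈ F, {p ∈ Ifun f | ψ p ≠ φ f p}.Finite) := by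
  rw [lhs_iff_clean]
  constructor
  · rintro ⟨X, hcoc, hncb⟩
    exact clean_to_rhs hdir hcoc hncb
  · rintro ⟨φ, hcoh, hnt⟩
    obtain ⟨X, hcoc, hncb⟩ := rhs_to_clean hdir φ hcoh hnt
    exact ⟨X, hcoc, hncb⟩
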